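/- Let C = {c₁, …, cₙ} ⊆ ℝ^d be n distinct points. For each b ∈ [d], let p^(b) = max_{i ≠ j} |cᵢ^(b) − cⱼ^(b)|² / ‖cᵢ − cⱼ‖₂². Then 1 ≤ Σ_{b ∈ [d]} p^(b) ≤ n. -/

import Mathlib

open Finset

theorem sum_max_ratio_l2_bounds (n d : ℕ) (hn : 2 ≤ n) (c : Fin n → Fin d → ℝ)
    (hinj : Function.Injective c) :
    1 ≤ (∑ b : Fin d, sSup {v : ℝ | ∃ i j : Fin n, i ≠ j ∧
          v = |c i b - c j b| ^ 2 / ∑ b' : Fin d, (c i b' - c j b') ^ 2}) ∧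
    (∑ b : Fin d, sSup {v : ℝ | ∃ i j : Fin n, i ≠ j ∧
          v = |c i b - c j b| ^ 2 / ∑ b' : Fin d, (c i b' - c j b') ^ 2}) ≤ n := by
  classical
  set S : Fin d → Set ℝ := fun b => {v : ℝ | ∃ i j : Fin n, i ≠ j ∧
      v = |c i b - c j b| ^ 2 / ∑ b' : Fin d, (c i b' - c j b') ^ 2} with hS
  set i0 : Fin n := ⟨0, by omega⟩ with hi0
  set i1 : Fin n := ⟨1, by omega⟩ with hi1
  have h01 : i0 ≠ i1 := by simp [hi0, hi1, Fin.ext_iff]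
  -- positivity of denominators
  have hden : ∀ i j : Fin n, i ≠ j → 0 < ∑ b' : Fin d, (c i b' - c j b') ^ 2 := by
    intro i j hij
    have hne : c i ≠ c j := fun h => hij (hinj h)
    obtain ⟨b, hb⟩ : ∃ b, c i b ≠ c j b := by
      by_contra h
      push_neg at h
      exact hne (funext h)
    refine Finset.sum_pos' (fun b' _ => sq_nonneg _) ⟨b, Finset.mem_univ _, ?_⟩
    have : c i b - c j b ≠ 0 := sub_ne_zero.mpr hb
    positivity
  -- every element of S b is at most 1
  have hle1 : ∀ b : Fin d, ∀ v ∈ S b, v ≤ 1 := by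
    intro b v hv
    obtain ⟨i, j, hij, rfl⟩ := hv
    rw [div_le_one (hden i j hij), sq_abs]
    exact Finset.single_le_sum (f := fun b' => (c i b' - c j b') ^ 2)
      (fun b' _ => sq_nonneg _) (Finset.mem_univ b)
  have hbdd : ∀ b : Fin d, BddAbove (S b) := fun b => ⟨1, fun v hv => hle1 b v hv⟩
  have hSne : ∀ b : Fin d, (S b).Nonempty := fun b =>
    ⟨_, ⟨i0, i1, h01, rfl⟩⟩
  constructor
  · -- lower bound
    set D : ℝ := ∑ b' : Fin d, (c i0 b' - c i1 b') ^ 2 with hD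
    have hDpos : 0 < D := hden i0 i1 h01
    have : (1 : ℝ) = ∑ b : Fin d, |c i0 b - c i1 b| ^ 2 / D := by
      rw [← Finset.sum_div]
      rw [eq_div_iff hDpos.ne', one_mul, hD]
      exact Finset.sum_congr rfl fun b _ => by rw [sq_abs]
    rw [this]
    refine Finset.sum_le_sum fun b _ => ?_
    exact le_csSup (hbdd b) ⟨i0, i1, h01, rfl⟩
  · -- upper bound via an orthonormal basis of the span of differences
    set E := EuclideanSpace ℝ (Fin d)
    set g : Fin n → E := fun i => WithLp.toLp 2 (fun b => c i b - c i0 b : Fin d → ℝ) with hg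
    set V : Submodule ℝ E := Submodule.span ℝ (Set.range g) with hV
    have hmn : Module.finrank ℝ V ≤ n := by
      have := finrank_range_le_card (R := ℝ) g
      simpa [Set.finrank, Fintype.card_fin] using this
    set m := Module.finrank ℝ V with hm
    let ob : OrthonormalBasis (Fin m) ℝ V := stdOrthonormalBasis ℝ V
    set q : Fin d → ℝ := fun b => ∑ k : Fin m, ((ob k : E) b) ^ 2 with hq
    -- each sSup is bounded by q b
    have hkey : ∀ b : Fin d, sSup (S b) ≤ q b := by
      intro b
      refine csSup_le (hSne b) ?_
      rintro v ⟨i, j, hij, rfl⟩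
      set w : E := WithLp.toLp 2 (fun b' => c i b' - c j b' : Fin d → ℝ) with hw
      have hwV : w ∈ V := by
        have : w = g i - g j := by
          ext b'
          show c i b' - c j b' = (c i b' - c i0 b') - (c j b' - c i0 b')
          ring
        rw [this]
        exact sub_mem (Submodule.subset_span ⟨i, rfl⟩) (Submodule.subset_span ⟨j, rfl⟩)
      set wv : V := ⟨w, hwV⟩ with hwv
      set r : Fin m → ℝ := fun k => ob.repr wv k with hr
      have hrepr : ∀ b' : Fin d, w b' = ∑ k : Fin m, r k * (ob k : E) b' := by
        intro b'
        calc w b' = ((∑ k : Fin m, ob.repr wv k • ob k : V) : E) b' := by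
              rw [ob.sum_repr wv]
          _ = ∑ k : Fin m, r k * (ob k : E) b' := by
              rw [Submodule.coe_sum]
              rw [WithLp.ofLp_sum, Finset.sum_apply]
              exact Finset.sum_congr rfl fun k _ => rfl
      have hD : ∑ b' : Fin d, (c i b' - c j b') ^ 2 = ∑ k : Fin m, r k ^ 2 := by
        have hnorm : ‖wv‖ = ‖ob.repr wv‖ := (ob.repr.norm_map wv).symm
        have h1 : ‖wv‖ ^ 2 = ∑ b' : Fin d, (c i b' - c j b') ^ 2 := by
          have heq : ‖wv‖ = ‖w‖ := rfl
          rw [heq, EuclideanSpace.norm_eq, Real.sq_sqrt (Finset.sum_nonneg fun _ _ => sq_nonneg _)]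
          exact Finset.sum_congr rfl fun b' _ => by rw [Real.norm_eq_abs, sq_abs]
        have h2 : ‖ob.repr wv‖ ^ 2 = ∑ k : Fin m, r k ^ 2 := by
          rw [EuclideanSpace.norm_eq, Real.sq_sqrt (Finset.sum_nonneg fun _ _ => sq_nonneg _)]
          exact Finset.sum_congr rfl fun k _ => by
            simp [hr, Real.norm_eq_abs, sq_abs]
        rw [← h1, hnorm, h2]
      have hcs : (w b) ^ 2 ≤ (∑ k : Fin m, r k ^ 2) * q b := by
        rw [hrepr b]
        exact Finset.sum_mul_sq_le_sq_mul_sq Finset.univ r (fun k => (ob k : E) b)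
      have hDpos := hden i j hij
      rw [div_le_iff₀ hDpos, sq_abs]
      calc (c i b - c j b) ^ 2 = (w b) ^ 2 := rfl
        _ ≤ (∑ k : Fin m, r k ^ 2) * q b := hcs
        _ = q b * ∑ b' : Fin d, (c i b' - c j b') ^ 2 := by rw [hD, mul_comm]
    -- sum the bounds
    have hsumq : ∑ b : Fin d, q b = m := by
      rw [hq]
      rw [Finset.sum_comm]
      have : ∀ k : Fin m, ∑ b : Fin d, ((ob k : E) b) ^ 2 = 1 := by
        intro k
        have hn1 : ‖(ob k : E)‖ = 1 := by
          have := ob.orthonormal.1 k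
          exact this
        have hsq : ‖(ob k : E)‖ ^ 2 = 1 := by rw [hn1]; norm_num
        rw [← hsq, EuclideanSpace.norm_eq,
          Real.sq_sqrt (Finset.sum_nonneg fun _ _ => sq_nonneg _)]
        exact Finset.sum_congr rfl fun b _ => by rw [Real.norm_eq_abs, sq_abs]
      simp [this]
    calc ∑ b : Fin d, sSup (S b) ≤ ∑ b : Fin d, q b := Finset.sum_le_sum fun b _ => hkey b
      _ = m := hsumq
      _ ≤ n := by exact_mod_cast hmn
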